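/- Fix ν > 0 and k ∈ ℕ with k ≥ 1. There exist A = A(k) < ∞ and ε̂ = ε̂(k) ∈ (0,1) with νε̂ < 1 such that for all ε ∈ (0, ε̂) and all n ∈ ℕ with n ≥ A|log ε|, the n-fold iterate of the diagonal voting function satisfies g_{νε}^{(n)}((1 − νε)/2 + ε) ≥ 1 − ε^k. -/

import Mathlib

/-- The voting function `g_γ`. -/
noncomputable def voteg (γ p₁ p₂ p₃ : ℝ) : ℝ :=
  p₁ * p₂ * p₃ + p₁ * p₂ * (1 - p₃) + p₁ * (1 - p₂) * p₃ + (1 - p₁) * p₂ * p₃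
    + (2 * γ / (3 + 3 * γ)) *
      ((1 - p₁) * (1 - p₂) * p₃ + (1 - p₁) * p₂ * (1 - p₃) + p₁ * (1 - p₂) * (1 - p₃))

/-- The diagonal voting function `g_γ(p) := g_γ(p,p,p)`. -/
noncomputable def votegd (γ p : ℝ) : ℝ := voteg γ p p p


lemma votegd_eq (γ p : ℝ) (hγ : 0 < γ) :
    votegd γ p = p + p * (1 - p) * (2 - 2*γ/(1+γ)) * (p - (1-γ)/2) := by
  unfold votegd voteg
  have h1 : (1:ℝ) + γ ≠ 0 := by linarith
  have h3 : (3:ℝ) + 3*γ ≠ 0 := by linarith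
  field_simp; ring

lemma votegd_one_sub (γ p : ℝ) (hγ : 0 < γ) :
    1 - votegd γ p = (1-p)^2 * (1 + 2*p - (2*γ/(1+γ))*p) := by
  unfold votegd voteg
  have h1 : (1:ℝ) + γ ≠ 0 := by linarith
  have h3 : (3:ℝ) + 3*γ ≠ 0 := by linarith
  field_simp; ring

section lems
variable {γ p : ℝ} (hγ : 0 < γ) (hγ1 : γ ≤ 1/100)

include hγ in
lemma c_bounds : 0 ≤ 2*γ/(1+γ) ∧ 2*γ/(1+γ) ≤ 2*γ := by
  have h1 : (0:ℝ) < 1 + γ := by linarith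
  constructor
  · positivity
  · rw [div_le_iff₀ h1]; nlinarith

include hγ hγ1 in
lemma votegd_ge (hp0 : (1-γ)/2 ≤ p) (hp1 : p ≤ 1) : p ≤ votegd γ p := by
  rw [votegd_eq γ p hγ]
  obtain ⟨hc0, hc1⟩ := c_bounds hγ
  have h := mul_nonneg (mul_nonneg (mul_nonneg
    (show (0:ℝ) ≤ p by linarith) (show (0:ℝ) ≤ 1 - p by linarith))
    (show (0:ℝ) ≤ 2 - 2*γ/(1+γ) by linarith))
    (show (0:ℝ) ≤ p - (1-γ)/2 by linarith)
  linarith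

include hγ hγ1 in
lemma votegd_le_one (hp0 : 0 ≤ p) (hp1 : p ≤ 1) : votegd γ p ≤ 1 := by
  have h := votegd_one_sub γ p hγ
  obtain ⟨hc0, hc1⟩ := c_bounds hγ
  have hcp : 2*γ/(1+γ) * p ≤ p := by nlinarith [mul_le_mul_of_nonneg_right hc1 hp0]
  have hX0 : (0:ℝ) ≤ 1 + 2*p - (2*γ/(1+γ))*p := by linarith
  nlinarith [mul_nonneg (sq_nonneg (1-p)) hX0]

include hγ hγ1 in
lemma votegd_phase2 (hp0 : 3/4 ≤ p) (hp1 : p ≤ 1) :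
    1 - votegd γ p ≤ (3/4) * (1 - p) := by
  have h := votegd_one_sub γ p hγ
  obtain ⟨hc0, hc1⟩ := c_bounds hγ
  have hp0' : (0:ℝ) ≤ p := by linarith
  have hcp0 : 0 ≤ 2*γ/(1+γ) * p := mul_nonneg hc0 hp0'
  have hcp : 2*γ/(1+γ) * p ≤ p := by nlinarith [mul_le_mul_of_nonneg_right hc1 hp0']
  have hq0 : (0:ℝ) ≤ 1 - p := by linarith
  have hq : 1 - p ≤ 1/4 := by linarith
  have hX0 : (0:ℝ) ≤ 1 + 2*p - (2*γ/(1+γ))*p := by linarith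
  have hX3 : 1 + 2*p - (2*γ/(1+γ))*p ≤ 3 := by linarith
  have h1 : (1-p) * (1 + 2*p - (2*γ/(1+γ))*p) ≤ (1/4) * 3 :=
    mul_le_mul hq hX3 hX0 (by norm_num)
  have h2 := mul_le_mul_of_nonneg_left h1 hq0
  nlinarith

include hγ hγ1 in
lemma votegd_phase1 {d : ℝ} (hd : 0 ≤ d) (hp0 : (1-γ)/2 + d ≤ p) (hp1 : p ≤ 3/4) :
    (1-γ)/2 + (19/16) * d ≤ votegd γ p := by
  rw [votegd_eq γ p hγ]
  obtain ⟨hc0, hc1⟩ := c_bounds hγ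
  have hA : 3/16 ≤ p * (1 - p) := by nlinarith
  have hB : 1 ≤ 2 - 2*γ/(1+γ) := by linarith
  have hx : d ≤ p - (1-γ)/2 := by linarith
  have h2 : p * (1-p) ≤ p * (1-p) * (2 - 2*γ/(1+γ)) := by nlinarith
  have h3 : 3/16 * d ≤ (p * (1-p) * (2 - 2*γ/(1+γ))) * (p - (1-γ)/2) :=
    mul_le_mul (le_trans hA h2) hx hd (by linarith)
  linarith
end lems

set_option maxHeartbeats 1600000 in
/-- bias amplification above the unstable fixed point: after
`O(|log ε|)` iterations of `g_{νε}` starting from `(1-νε)/2 + ε`, the value is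
within `ε^k` of `1`. -/
theorem voteg_bias_amplification_up (ν : ℝ) (hν : 0 < ν) (k : ℕ) (hk : 1 ≤ k) :
    ∃ A : ℝ, ∃ εhat : ℝ, εhat ∈ Set.Ioo (0 : ℝ) 1 ∧ ν * εhat < 1 ∧
      ∀ ε ∈ Set.Ioo (0 : ℝ) εhat, ∀ n : ℕ, A * |Real.log ε| ≤ (n : ℝ) →
        1 - ε ^ k ≤ (fun x => votegd (ν * ε) x)^[n] ((1 - ν * ε) / 2 + ε) := by
  have hlog19 : 0 < Real.log (19/16) := Real.log_pos (by norm_num)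
  have hlog43 : 0 < Real.log (4/3) := Real.log_pos (by norm_num)
  have hexp2 : (2:ℝ) ≤ Real.exp 1 := by
    have := Real.add_one_le_exp (1:ℝ); linarith
  have hexpinv : Real.exp (-1) ≤ 1/2 := by
    rw [Real.exp_neg]
    rw [inv_le_comm₀ (by positivity) (by norm_num)]
    simpa using hexp2
  refine ⟨(1/Real.log (19/16) + 1) + (k:ℝ)/Real.log (4/3),
    min (Real.exp (-1)) (1/(200*ν)), ⟨⟨?_, ?_⟩, ?_, ?_⟩⟩
  · positivity
  · calc min (Real.exp (-1)) (1/(200*ν)) ≤ Real.exp (-1) := min_le_left _ _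
      _ < 1 := by rw [← Real.exp_zero]; exact Real.exp_lt_exp.2 (by norm_num)
  · calc ν * min (Real.exp (-1)) (1/(200*ν)) ≤ ν * (1/(200*ν)) :=
        mul_le_mul_of_nonneg_left (min_le_right _ _) hν.le
      _ = 1/200 := by field_simp
      _ < 1 := by norm_num
  · rintro ε ⟨hε0, hε1⟩ n hn
    set γ := ν * ε with hγdef
    have hγ : 0 < γ := by positivity
    have hεe : ε ≤ Real.exp (-1) :=
      le_trans hε1.le (min_le_left _ _)
    have hε2 : ε ≤ 1/2 := le_trans hεe hexpinv
    have hγ1 : γ ≤ 1/100 := by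
      have h1 : ε ≤ 1/(200*ν) := le_trans hε1.le (min_le_right _ _)
      have := mul_le_mul_of_nonneg_left h1 hν.le
      rw [hγdef]
      calc ν * ε ≤ ν * (1/(200*ν)) := this
        _ = 1/200 := by field_simp
        _ ≤ 1/100 := by norm_num
    set L := -Real.log ε with hLdef
    have hlogε : Real.log ε < 0 := Real.log_neg hε0 (by linarith)
    have habs : |Real.log ε| = L := abs_of_neg hlogε
    have hL1 : 1 ≤ L := by
      have := Real.log_le_log hε0 hεe
      rw [Real.log_exp] at this
      simp only [hLdef]; linarith
    set f : ℝ → ℝ := fun x => votegd γ x with hf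
    set p₀ : ℝ := (1 - γ)/2 + ε with hp₀
    -- invariant
    have hinv : ∀ m : ℕ, (1-γ)/2 ≤ f^[m] p₀ ∧ f^[m] p₀ ≤ 1 := by
      intro m
      induction m with
      | zero => constructor <;> simp [hp₀] <;> linarith
      | succ m ih =>
        rw [Function.iterate_succ_apply']
        obtain ⟨h1, h2⟩ := ih
        constructor
        · exact le_trans h1 (votegd_ge hγ hγ1 h1 h2)
        · exact votegd_le_one hγ hγ1 (by linarith) h2
    -- phase 1
    have hph1 : ∀ m : ℕ, 3/4 ≤ f^[m] p₀ ∨ (1-γ)/2 + (19/16)^m * ε ≤ f^[m] p₀ := by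
      intro m
      induction m with
      | zero => right; simp [hp₀]
      | succ m ih =>
        obtain ⟨h1, h2⟩ := hinv m
        rcases le_or_gt (3/4 : ℝ) (f^[m] p₀) with hc | hc
        · left
          rw [Function.iterate_succ_apply']
          exact le_trans hc (votegd_ge hγ hγ1 h1 h2)
        · rcases ih with h | h
          · linarith
          · right
            rw [Function.iterate_succ_apply']
            have hd : (0:ℝ) ≤ (19/16)^m * ε := by positivity
            have := votegd_phase1 hγ hγ1 hd h hc.le
            calc (1-γ)/2 + (19/16)^(m+1) * ε
                = (1-γ)/2 + (19/16) * ((19/16)^m * ε) := by ring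
              _ ≤ votegd γ (f^[m] p₀) := this
    -- phase 2
    have hph2 : ∀ N : ℕ, 3/4 ≤ f^[N] p₀ → ∀ j : ℕ,
        3/4 ≤ f^[N+j] p₀ ∧ 1 - f^[N+j] p₀ ≤ (3/4)^j * (1/4) := by
      intro N hN j
      induction j with
      | zero => exact ⟨by simpa using hN, by simp; linarith [(hinv N).2, hN]⟩
      | succ j ih =>
        obtain ⟨h1, h2⟩ := ih
        have h3 := (hinv (N+j)).2
        have hstep : f^[N+(j+1)] p₀ = votegd γ (f^[N+j] p₀) := by
          rw [show N+(j+1) = (N+j)+1 by ring, Function.iterate_succ_apply']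
        constructor
        · rw [hstep]
          exact le_trans h1 (votegd_ge hγ hγ1 (by linarith) h3)
        · rw [hstep]
          calc 1 - votegd γ (f^[N+j] p₀) ≤ (3/4) * (1 - f^[N+j] p₀) :=
              votegd_phase2 hγ hγ1 h1 h3
            _ ≤ (3/4) * ((3/4)^j * (1/4)) := by linarith
            _ = (3/4)^(j+1) * (1/4) := by ring
    -- choose N₁
    set N₁ : ℕ := ⌈L / Real.log (19/16)⌉₊ with hN₁def
    have hceil : L / Real.log (19/16) ≤ (N₁ : ℝ) := Nat.le_ceil _
    have hceil2 : (N₁ : ℝ) ≤ L / Real.log (19/16) + 1 := by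
      have := Nat.ceil_lt_add_one (show (0:ℝ) ≤ L / Real.log (19/16) by positivity)
      linarith
    rw [habs] at hn
    have hN₁bd : (N₁ : ℝ) + ((k:ℝ)/Real.log (4/3)) * L ≤ (n:ℝ) := by
      have h1 : (N₁ : ℝ) ≤ (1/Real.log (19/16) + 1) * L := by
        have : L / Real.log (19/16) + 1 ≤ (1/Real.log (19/16) + 1) * L := by
          have : L / Real.log (19/16) = (1/Real.log (19/16)) * L := by ring
          nlinarith [div_nonneg (show (0:ℝ) ≤ 1 by norm_num) hlog19.le]
        linarith
      nlinarith
    have hN₁n : N₁ ≤ n := by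
      have hkL : 0 ≤ ((k:ℝ)/Real.log (4/3)) * L := by positivity
      exact_mod_cast Nat.cast_le.mp (show (N₁:ℝ) ≤ (n:ℝ) by linarith)
    set m := n - N₁ with hmdef
    have hmcast : (m : ℝ) = (n:ℝ) - (N₁:ℝ) := by
      rw [hmdef, Nat.cast_sub hN₁n]
    have hmbd : ((k:ℝ)/Real.log (4/3)) * L ≤ (m:ℝ) := by
      rw [hmcast]; linarith
    -- (a): start of phase 2
    have hstart : 3/4 ≤ f^[N₁] p₀ := by
      have ha : (1/2 : ℝ) ≤ (19/16)^N₁ * ε := by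
        have hpow : 1/(2*ε) ≤ (19/16:ℝ)^N₁ := by
          rw [← Real.log_le_log_iff (by positivity) (by positivity)]
          rw [Real.log_pow]
          have h1 : Real.log (1/(2*ε)) ≤ L := by
            rw [one_div, Real.log_inv, Real.log_mul (by norm_num) (ne_of_gt hε0)]
            have := Real.log_nonneg (show (1:ℝ) ≤ 2 by norm_num)
            simp only [hLdef]; linarith
          have h2 : L ≤ (N₁:ℝ) * Real.log (19/16) := by
            rw [div_le_iff₀ hlog19] at hceil; linarith
          linarith
        have := mul_le_mul_of_nonneg_right hpow hε0.le
        have heq : 1/(2*ε) * ε = 1/2 := by field_simp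
        linarith [heq]
      rcases hph1 N₁ with h | h
      · exact h
      · linarith
    -- (b): decay bound
    have hb : (3/4:ℝ)^m ≤ 4 * ε^k := by
      rw [← Real.log_le_log_iff (by positivity) (by positivity)]
      rw [Real.log_pow, Real.log_mul (by norm_num) (by positivity), Real.log_pow]
      have h34 : Real.log (3/4 : ℝ) = - Real.log (4/3) := by
        rw [show (3/4:ℝ) = (4/3)⁻¹ by norm_num, Real.log_inv]
      rw [h34]
      have h4 : 0 ≤ Real.log 4 := Real.log_nonneg (by norm_num)
      have hkL : (k:ℝ) * L ≤ (m:ℝ) * Real.log (4/3) := by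
        have h5 : ((k:ℝ)/Real.log (4/3)) * L * Real.log (4/3) = (k:ℝ) * L := by
          field_simp
        linarith [mul_le_mul_of_nonneg_right hmbd hlog43.le]
      have : (k:ℝ) * Real.log ε = -((k:ℝ) * L) := by simp only [hLdef]; ring
      rw [this]; linarith
    -- conclude
    have hfin := (hph2 N₁ hstart m).2
    rw [show N₁ + m = n from Nat.add_sub_cancel' hN₁n] at hfin
    clear_value m N₁ f p₀ L γ
    have hfin2 : 1 - f^[n] p₀ ≤ ε^k := by
      have h6 : (3/4:ℝ)^m * (1/4) ≤ (4 * ε^k) * (1/4) := by linarith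
      have h7 : (4 * ε^k) * (1/4) = ε^k := by ring
      linarith
    linarith
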